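/- The section functor Γ : MBB(X) → NMod_pr(X) is faithful: if φ, ψ are MBB morphisms from T_1 to T_2 inducing equal module morphisms Γ(φ) = Γ(ψ) : Γ(T_1) → Γ(T_2), then φ = ψ (i.e. their representatives agree fiberwise m-a.e.). -/

import Mathlib

open MeasureTheory Filter

namespace L0SerreSwan

/-- A measurable Banach bundle over `(X,d,m)`: a Borel partition `(E_n)_{n∈ℕ}` of `X`,
with total space `⊔ₙ Eₙ × ℝⁿ`, together with a measurable function `nrm` assigning to
`m`-a.e. point `x ∈ E_n` a norm `nrm n x ·` on the fiber `ℝⁿ`. -/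
structure MBB (X : Type*) [MeasurableSpace X] (μ : MeasureTheory.Measure X) where
  E : ℕ → Set X
  measE : ∀ n, MeasurableSet (E n)
  disjE : ∀ n m, n ≠ m → Disjoint (E n) (E m)
  unionE : (⋃ n, E n) = Set.univ
  nrm : (n : ℕ) → X → (Fin n → ℝ) → ℝ
  meas_nrm : ∀ n, Measurable (fun p : X × (Fin n → ℝ) => nrm n p.1 p.2)
  nrm_nonneg : ∀ n, ∀ᵐ x ∂μ, x ∈ E n → ∀ v, 0 ≤ nrm n x v
  nrm_definite : ∀ n, ∀ᵐ x ∂μ, x ∈ E n → ∀ v, nrm n x v = 0 → v = 0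
  nrm_smul : ∀ n, ∀ᵐ x ∂μ, x ∈ E n → ∀ (c : ℝ) (v), nrm n x (c • v) = |c| * nrm n x v
  nrm_triangle : ∀ n, ∀ᵐ x ∂μ, x ∈ E n → ∀ v w, nrm n x (v + w) ≤ nrm n x v + nrm n x w

variable {X : Type*} [MeasurableSpace X] {μ : MeasureTheory.Measure X}

/-- A measurable section of a measurable Banach bundle, recorded by its values
`val n x ∈ ℝⁿ` (only the values for `x ∈ E_n` are relevant). -/
structure Sec (B : MBB X μ) where
  val : (n : ℕ) → X → Fin n → ℝ
  meas : ∀ n, Measurable (val n)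

/-- Two sections agree `m`-a.e. (fiberwise, on each piece of the partition). -/
def Sec.aeeq (B : MBB X μ) (s t : Sec B) : Prop :=
  ∀ n, ∀ᵐ x ∂μ, x ∈ B.E n → s.val n x = t.val n x

/-- Pointwise sum of sections. -/
def Sec.add {B : MBB X μ} (s t : Sec B) : Sec B :=
  ⟨fun n x i => s.val n x i + t.val n x i, fun n =>
    measurable_pi_lambda _ fun i =>
      ((measurable_pi_apply i).comp (s.meas n)).add
        ((measurable_pi_apply i).comp (t.meas n))⟩

/-- Pointwise difference of sections. -/
def Sec.sub {B : MBB X μ} (s t : Sec B) : Sec B :=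
  ⟨fun n x i => s.val n x i - t.val n x i, fun n =>
    measurable_pi_lambda _ fun i =>
      ((measurable_pi_apply i).comp (s.meas n)).sub
        ((measurable_pi_apply i).comp (t.meas n))⟩

/-- Multiplication of a section by a (Borel representative of an) `L⁰` function. -/
def Sec.smul {B : MBB X μ} (g : X → ℝ) (hg : Measurable g) (s : Sec B) : Sec B :=
  ⟨fun n x i => g x * s.val n x i, fun n =>
    measurable_pi_lambda _ fun i =>
      hg.mul ((measurable_pi_apply i).comp (s.meas n))⟩

/-- The pointwise norm `|s|(x) = nrm(s(x))` of a section. -/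
noncomputable def ptNorm (B : MBB X μ) (s : Sec B) : X → ℝ :=
  fun x => ∑' n, (B.E n).indicator (fun y => B.nrm n y (s.val n y)) x

/-- The distance `d(s,t) = ∫ |s-t| ∧ 1 dm'` on sections. -/
noncomputable def secDist (B : MBB X μ) (m' : MeasureTheory.Measure X) (s t : Sec B) : ℝ :=
  ∫ x, min (ptNorm B (s.sub t) x) 1 ∂m'

/-- The constant section associated to a vector `q ∈ ℝⁿ`: it equals `q` on `E_n` and
vanishes on the other pieces of the partition. -/
def constSec (B : MBB X μ) (n : ℕ) (q : Fin n → ℝ) : Sec B :=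
  ⟨fun k _x i => if h : k = n then q (Fin.cast h i) else 0,
   fun _k => measurable_const⟩

/-- A finite `L⁰`-linear combination `∑ᵢ gᵢ • uᵢ` of sections. -/
def lincomb {B : MBB X μ} {k : ℕ} (g : Fin k → X → ℝ) (hg : ∀ i, Measurable (g i))
    (u : Fin k → Sec B) : Sec B :=
  ⟨fun n x j => ∑ i, g i x * (u i).val n x j, fun n =>
    measurable_pi_lambda _ fun j =>
      Finset.measurable_sum _ fun i _ =>
        (hg i).mul ((measurable_pi_apply j).comp ((u i).meas n))⟩

/-- A (pre-)morphism of measurable Banach bundles: a measurable map over `X` which, for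
`m`-a.e. `x ∈ E¹_n ∩ E²_m`, is linear and 1-Lipschitz from the fiber of `T₁` to the
fiber of `T₂` at `x`. -/
structure MBBHom (B₁ B₂ : MBB X μ) where
  toFun : (n m : ℕ) → X → (Fin n → ℝ) → (Fin m → ℝ)
  meas : ∀ n m, Measurable (fun p : X × (Fin n → ℝ) => toFun n m p.1 p.2)
  ae_add : ∀ n m, ∀ᵐ x ∂μ, x ∈ B₁.E n ∩ B₂.E m →
    ∀ v w, toFun n m x (v + w) = toFun n m x v + toFun n m x w
  ae_smul : ∀ n m, ∀ᵐ x ∂μ, x ∈ B₁.E n ∩ B₂.E m →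
    ∀ (c : ℝ) (v), toFun n m x (c • v) = c • toFun n m x v
  ae_lipschitz : ∀ n m, ∀ᵐ x ∂μ, x ∈ B₁.E n ∩ B₂.E m →
    ∀ v, B₂.nrm m x (toFun n m x v) ≤ B₁.nrm n x v

/-- `t` represents the composition `φ ∘ s` (that is, `t` is a measurable section of `T₂`
which `m`-a.e. equals `φ` applied fiberwise to the section `s` of `T₁`). -/
def Represents {B₁ B₂ : MBB X μ} (φ : MBBHom B₁ B₂) (s : Sec B₁) (t : Sec B₂) : Prop :=
  ∀ n m, ∀ᵐ x ∂μ, x ∈ B₁.E n ∩ B₂.E m → t.val m x = φ.toFun n m x (s.val n x)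


/-- Auxiliary: a (pointwise) additive and homogeneous map on `Fin n → ℝ` is determined
by its values on the standard basis vectors. -/
lemma lin_apply_eq_sum {n m : ℕ} (f : (Fin n → ℝ) → Fin m → ℝ)
    (hadd : ∀ v w, f (v + w) = f v + f w)
    (hsmul : ∀ (c : ℝ) v, f (c • v) = c • f v) (v : Fin n → ℝ) :
    f v = ∑ i, v i • f (Pi.single i 1) := by
  have key : ∀ s : Finset (Fin n),
      f (∑ i ∈ s, v i • (Pi.single i 1 : Fin n → ℝ)) = ∑ i ∈ s, v i • f (Pi.single i 1) := by
    intro s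
    induction s using Finset.induction with
    | empty =>
        have := hsmul 0 0
        simpa using this
    | insert _ _ hx ih =>
        rw [Finset.sum_insert hx, hadd, hsmul, ih, Finset.sum_insert hx]
  have hv : v = ∑ i, v i • (Pi.single i 1 : Fin n → ℝ) := by
    have h2 : ∀ i, v i • (Pi.single i 1 : Fin n → ℝ) = Pi.single i (v i) := fun i => by
      rw [← Pi.single_smul, smul_eq_mul, mul_one]
    simp_rw [h2]
    exact (Finset.univ_sum_single v).symm
  conv_lhs => rw [hv]
  exact key Finset.univ

/-- Auxiliary: the natural measurable representative of `φ ∘ (constSec B₁ n q)`. -/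
noncomputable def liftSec {B₁ B₂ : MBB X μ} (φ : MBBHom B₁ B₂) (n : ℕ) (q : Fin n → ℝ) : Sec B₂ :=
  ⟨fun m' x => (B₁.E n).indicator (fun y => φ.toFun n m' y q) x,
   fun m' => Measurable.indicator
     ((φ.meas n m').comp (measurable_id.prodMk measurable_const)) (B₁.measE n)⟩

lemma liftSec_represents {B₁ B₂ : MBB X μ} (φ : MBBHom B₁ B₂) (n : ℕ) (q : Fin n → ℝ) :
    Represents φ (constSec B₁ n q) (liftSec φ n q) := by
  intro n' m'
  by_cases hn : n' = n
  · subst hn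
    refine Filter.Eventually.of_forall fun x hx => ?_
    have hval : (constSec B₁ n' q).val n' x = q := by
      funext i
      simp [constSec]
    rw [hval]
    simp [liftSec, Set.indicator_of_mem hx.1]
  · filter_upwards [φ.ae_smul n' m'] with x hsm hx
    have hx1 : x ∉ B₁.E n := fun hmem =>
      (B₁.disjE n' n hn).le_bot ⟨hx.1, hmem⟩
    have hval : (constSec B₁ n q).val n' x = 0 := by
      funext i
      simp [constSec, hn]
    rw [hval]
    have h0 : φ.toFun n' m' x 0 = 0 := by
      have := hsm hx 0 0
      simpa using this
    rw [h0]
    simp [liftSec, Set.indicator_of_notMem hx1]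

/-- **The section functor is faithful.** If two morphisms `φ, ψ` of measurable Banach
bundles over a metric measure space `(X,d,m)` induce equal module morphisms on sections
(i.e. for every section `s`, any representatives of `φ ∘ s` and `ψ ∘ s` agree `m`-a.e.),
then `φ = ψ`, i.e. they agree fiberwise at `m`-a.e. base point. -/
theorem section_functor_faithful
    {X : Type*} [MetricSpace X] [CompleteSpace X] [SecondCountableTopology X]
    [MeasurableSpace X] [BorelSpace X]
    (μ : Measure X) [IsLocallyFiniteMeasure μ] (hμ : μ ≠ 0)
    (B₁ B₂ : MBB X μ) (φ ψ : MBBHom B₁ B₂)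
    (h : ∀ (s : Sec B₁) (t u : Sec B₂),
      Represents φ s t → Represents ψ s u → Sec.aeeq B₂ t u) :
    ∀ n m, ∀ᵐ x ∂μ, x ∈ B₁.E n ∩ B₂.E m →
      ∀ v, φ.toFun n m x v = ψ.toFun n m x v := by
  intro n m
  have hbasis : ∀ i : Fin n, ∀ᵐ x ∂μ, x ∈ B₁.E n ∩ B₂.E m →
      φ.toFun n m x (Pi.single i 1) = ψ.toFun n m x (Pi.single i 1) := by
    intro i
    have hh := h (constSec B₁ n (Pi.single i 1)) _ _
      (liftSec_represents φ n (Pi.single i 1)) (liftSec_represents ψ n (Pi.single i 1)) m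
    filter_upwards [hh] with x hx hmem
    have := hx hmem.2
    simpa [liftSec, Set.indicator_of_mem hmem.1] using this
  have hball : ∀ᵐ x ∂μ, ∀ i : Fin n, x ∈ B₁.E n ∩ B₂.E m →
      φ.toFun n m x (Pi.single i 1) = ψ.toFun n m x (Pi.single i 1) :=
    (MeasureTheory.ae_all_iff).2 hbasis
  filter_upwards [hball, φ.ae_add n m, φ.ae_smul n m, ψ.ae_add n m, ψ.ae_smul n m]
    with x hb hφa hφs hψa hψs hx v
  rw [lin_apply_eq_sum _ (hφa hx) (hφs hx), lin_apply_eq_sum _ (hψa hx) (hψs hx)]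
  exact Finset.sum_congr rfl fun i _ => by rw [hb i hx]


end L0SerreSwan
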